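/- (Fixed Point Theorem without behaviors.) Let C be a gs-monoidal category with objects A, C₀, B, and let F : C₀⊗C₀ → B be a morphism such that for every f : A⊗C₀ → B there exists a functional morphism c_f : A → C₀ with F∘(c_f⊗id_{C₀}) = f. Then every morphism g : B → B has a fixed point: there exists b : A → B with g∘b = b. -/

import Mathlib

open CategoryTheory MonoidalCategory

universe w v u v' u'

/-- A gs-monoidal category: a symmetric monoidal category in which every object carries a
commutative comonoid structure (copy and discard), compatible with tensor products. -/
class GSCat (C : Type u) [Category.{v} C] [MonoidalCategory C] [SymmetricCategory C] where
  copy : ∀ A : C, A ⟶ A ⊗ A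
  discard : ∀ A : C, A ⟶ 𝟙_ C
  copy_assoc : ∀ A : C, copy A ≫ (copy A ▷ A) ≫ (α_ A A A).hom = copy A ≫ (A ◁ copy A)
  copy_comm : ∀ A : C, copy A ≫ (β_ A A).hom = copy A
  copy_counit_left : ∀ A : C, copy A ≫ (discard A ▷ A) ≫ (λ_ A).hom = 𝟙 A
  copy_counit_right : ∀ A : C, copy A ≫ (A ◁ discard A) ≫ (ρ_ A).hom = 𝟙 A
  copy_tensor : ∀ A X : C, copy (A ⊗ X) = (copy A ⊗ₘ copy X) ≫ tensorμ A A X X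
  discard_tensor : ∀ A X : C, discard (A ⊗ X) = (discard A ⊗ₘ discard X) ≫ (λ_ (𝟙_ C)).hom
  discard_unit : discard (𝟙_ C) = 𝟙 (𝟙_ C)

variable {C : Type u} [Category.{v} C] [MonoidalCategory C] [SymmetricCategory C] [GSCat C]

/-- The domain `dom(f) = ρ_A ∘ (id_A ⊗ (ε_X ∘ f)) ∘ Δ_A` of a morphism `f : A ⟶ X`. -/
def gsDom {A X : C} (f : A ⟶ X) : A ⟶ A :=
  GSCat.copy A ≫ (A ◁ (f ≫ GSCat.discard X)) ≫ (ρ_ A).hom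

/-- A morphism is normalized if `f ∘ dom(f) = f`. -/
def GsNormalized {A X : C} (f : A ⟶ X) : Prop := gsDom f ≫ f = f

/-- A morphism is functional if `Δ_X ∘ f = (f ⊗ f) ∘ Δ_A`. -/
def GsFunctional {A X : C} (f : A ⟶ X) : Prop :=
  f ≫ GSCat.copy X = GSCat.copy A ≫ (f ⊗ₘ f)

/-- A morphism is total if `ε_X ∘ f = ε_A`. -/
def GsTotal {A X : C} (f : A ⟶ X) : Prop := f ≫ GSCat.discard X = GSCat.discard A

/-- `f ⊒ g` : `f` agrees with `g` on the domain of `g`, i.e. `f ∘ dom(g) = g`. -/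
def GsRestrict {A X : C} (f g : A ⟶ X) : Prop := gsDom g ≫ f = g

/-- A gs-monoidal category is normalized if all of its morphisms are normalized. -/
class GsNormalizedCat (C : Type u) [Category.{v} C] [MonoidalCategory C]
    [SymmetricCategory C] [GSCat C] : Prop where
  norm : ∀ {A X : C} (f : A ⟶ X), GsNormalized f

/-- Fixed Point Theorem without behaviors: in a gs-monoidal category, if
every `f : A ⊗ C0 ⟶ B` is of the form `F ∘ (c_f ⊗ id)` for some functional `c_f : A ⟶ C0`,
then every `g : B ⟶ B` has a fixed point `b : A ⟶ B` with `g ∘ b = b`. -/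
theorem fixed_point_theorem_plain {A C0 B : C} (F : C0 ⊗ C0 ⟶ B)
    (hF : ∀ f : A ⊗ C0 ⟶ B, ∃ cf : A ⟶ C0, GsFunctional cf ∧ (cf ▷ C0) ≫ F = f)
    (g : B ⟶ B) : ∃ b : A ⟶ B, b ≫ g = b := by
  obtain ⟨cf, hfun, hc⟩ :=
    hF ((GSCat.discard A ▷ C0) ≫ (λ_ C0).hom ≫ GSCat.copy C0 ≫ F ≫ g)
  refine ⟨GSCat.copy A ≫ (cf ⊗ₘ cf) ≫ F, ?_⟩
  have key : GSCat.copy A ≫ (A ◁ cf) ≫ (GSCat.discard A ▷ C0) ≫ (λ_ C0).hom = cf := by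
    rw [whisker_exchange_assoc]
    have h1 : (𝟙_ C ◁ cf) ≫ (λ_ C0).hom = (λ_ A).hom ≫ cf :=
      MonoidalCategory.leftUnitor_naturality cf
    calc GSCat.copy A ≫ (GSCat.discard A ▷ A) ≫ (𝟙_ C ◁ cf) ≫ (λ_ C0).hom
        = (GSCat.copy A ≫ (GSCat.discard A ▷ A) ≫ (λ_ A).hom) ≫ cf := by
          rw [h1]; simp only [Category.assoc]
      _ = cf := by rw [GSCat.copy_counit_left]; simp
  have main : GSCat.copy A ≫ (cf ⊗ₘ cf) ≫ F
      = (GSCat.copy A ≫ (cf ⊗ₘ cf) ≫ F) ≫ g := by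
    calc GSCat.copy A ≫ (cf ⊗ₘ cf) ≫ F
        = GSCat.copy A ≫ (A ◁ cf) ≫ (cf ▷ C0) ≫ F := by
          rw [MonoidalCategory.tensorHom_def']; simp only [Category.assoc]
      _ = GSCat.copy A ≫ (A ◁ cf) ≫ (GSCat.discard A ▷ C0) ≫ (λ_ C0).hom ≫
            GSCat.copy C0 ≫ F ≫ g := by rw [hc]
      _ = (GSCat.copy A ≫ (A ◁ cf) ≫ (GSCat.discard A ▷ C0) ≫ (λ_ C0).hom) ≫
            GSCat.copy C0 ≫ F ≫ g := by simp only [Category.assoc]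
      _ = cf ≫ GSCat.copy C0 ≫ F ≫ g := by rw [key]
      _ = (cf ≫ GSCat.copy C0) ≫ F ≫ g := by simp only [Category.assoc]
      _ = (GSCat.copy A ≫ (cf ⊗ₘ cf)) ≫ F ≫ g := by rw [hfun]
      _ = (GSCat.copy A ≫ (cf ⊗ₘ cf) ≫ F) ≫ g := by simp only [Category.assoc]
  exact main.symm
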